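/- Let k ≥ 3 be odd and let p be a prime with p ≡ 1 (mod 4k). Then for every prime q there exists an integer z with z ≡ 2k (mod 4k) and integers x, y such that x² + y² + z^k ≡ p^k (mod q^m) for every m ≥ 1; i.e., there is no congruence obstruction to representing p^k as x² + y² + z^k with z ≡ 2k (mod 4k). -/

import Mathlib

/-- Hensel-style lifting: for an odd prime `q` and `c` not divisible by `q`,
`x^2 + y^2 ≡ c` is solvable modulo every power of `q`. -/
lemma sq_add_sq_mod_odd_prime_pow (q : ℕ) (hq : q.Prime) (hq2 : q ≠ 2) (c : ℤ)
    (hc : ¬ ((q : ℤ) ∣ c)) (m : ℕ) (hm : 1 ≤ m) :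
    ∃ x y : ℤ, x ^ 2 + y ^ 2 ≡ c [ZMOD (q : ℤ) ^ m] := by
  haveI : Fact q.Prime := ⟨hq⟩
  have hqZ : Prime (q : ℤ) := Nat.prime_iff_prime_int.mp hq
  suffices h : ∀ n : ℕ, ∃ x y : ℤ,
      (x ^ 2 + y ^ 2 ≡ c [ZMOD (q : ℤ) ^ (n + 1)]) ∧ ¬ ((q : ℤ) ∣ x) by
    obtain ⟨x, y, h1, _⟩ := h (m - 1)
    have : m - 1 + 1 = m := by omega
    rw [this] at h1
    exact ⟨x, y, h1⟩
  intro n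
  induction n with
  | zero =>
      obtain ⟨a, b, hab⟩ := ZMod.sq_add_sq q ((c : ZMod q))
      have hab0 : a ≠ 0 ∨ b ≠ 0 := by
        by_contra h
        push_neg at h
        rw [h.1, h.2] at hab
        norm_num at hab
        exact hc ((ZMod.intCast_zmod_eq_zero_iff_dvd c q).mp hab.symm)
      have key : ∀ a b : ZMod q, a ^ 2 + b ^ 2 = (c : ZMod q) → a ≠ 0 →
          ∃ x y : ℤ, (x ^ 2 + y ^ 2 ≡ c [ZMOD (q : ℤ) ^ (0 + 1)]) ∧ ¬ ((q : ℤ) ∣ x) := by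
        intro a b hab ha
        refine ⟨(a.val : ℤ), (b.val : ℤ), ?_, ?_⟩
        · rw [zero_add, pow_one, ← ZMod.intCast_eq_intCast_iff]
          push_cast
          rw [ZMod.natCast_val, ZMod.natCast_val, ZMod.cast_id, ZMod.cast_id]
          exact hab
        · rw [← ZMod.intCast_zmod_eq_zero_iff_dvd]
          push_cast
          rw [ZMod.natCast_val, ZMod.cast_id]
          exact ha
      rcases hab0 with ha | hb
      · exact key a b hab ha
      · exact key b a (by rw [← hab]; ring) hb
  | succ n ih =>
      obtain ⟨x, y, hxy, hx⟩ := ih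
      obtain ⟨D, hD⟩ : (q : ℤ) ^ (n + 1) ∣ c - (x ^ 2 + y ^ 2) := hxy.dvd
      have h2x : ((2 * x : ℤ) : ZMod q) ≠ 0 := by
        intro h0
        rw [ZMod.intCast_zmod_eq_zero_iff_dvd] at h0
        rcases hqZ.dvd_mul.mp h0 with h2 | hxx
        · have := Int.le_of_dvd (by norm_num) h2
          have := hq.two_le
          omega
        · exact hx hxx
      have hqt : (q : ℤ) ∣ 2 * x * ((((D : ZMod q) / ((2 * x : ℤ) : ZMod q)).val : ℕ) : ℤ) - D := by
        rw [← ZMod.intCast_zmod_eq_zero_iff_dvd]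
        push_cast
        rw [ZMod.natCast_val, ZMod.cast_id]
        have h2x' : (2 * (x : ZMod q)) ≠ 0 := by push_cast at h2x; exact h2x
        rw [mul_div_assoc'] at *
        push_cast at h2x ⊢
        rw [mul_div_cancel_left₀ _ h2x', sub_self]
      set t : ℤ := ((((D : ZMod q) / ((2 * x : ℤ) : ZMod q)).val : ℕ) : ℤ) with ht
      obtain ⟨E, hE⟩ := hqt
      refine ⟨x + t * (q : ℤ) ^ (n + 1), y, ?_, ?_⟩
      · have : (q : ℤ) ^ (n + 1 + 1) ∣ c - ((x + t * (q : ℤ) ^ (n + 1)) ^ 2 + y ^ 2) := by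
          refine ⟨-E - t ^ 2 * (q : ℤ) ^ n, ?_⟩
          linear_combination hD - (q : ℤ) ^ (n + 1) * hE
        exact (Int.modEq_iff_dvd.mpr this)
      · intro hdvd
        apply hx
        have h2 : (q : ℤ) ∣ t * (q : ℤ) ^ (n + 1) := Dvd.dvd.mul_left (dvd_pow_self _ (by omega)) t
        have := dvd_sub hdvd h2
        simpa using this


/-- Integers ≡ 1 (mod 8) are squares modulo every power of 2. -/
lemma sq_mod_two_pow (c : ℤ) (hc : c ≡ 1 [ZMOD 8]) (m : ℕ) :
    ∃ x : ℤ, (x ^ 2 ≡ c [ZMOD (2 : ℤ) ^ (m + 3)]) ∧ Odd x := by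
  induction m with
  | zero =>
      refine ⟨1, ?_, odd_one⟩
      have : ((2 : ℤ) ^ (0 + 3)) = 8 := by norm_num
      rw [this]
      simpa using hc.symm
  | succ n ih =>
      obtain ⟨x, hx, hxo⟩ := ih
      obtain ⟨D, hD⟩ : (2 : ℤ) ^ (n + 3) ∣ c - x ^ 2 := hx.dvd
      obtain ⟨j, hj⟩ := hxo
      refine ⟨x + D * 2 ^ (n + 2), ?_, ?_⟩
      · have hdvd : (2 : ℤ) ^ (n + 3 + 1) ∣ c - (x + D * 2 ^ (n + 2)) ^ 2 := by
          refine ⟨-D * j - D ^ 2 * 2 ^ n, ?_⟩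
          linear_combination hD - (2:ℤ)^(n+3) * D * hj
        exact Int.modEq_iff_dvd.mpr hdvd
      · exact ⟨j + D * 2 ^ (n + 1), by rw [hj]; ring⟩

/-- Integers ≡ 1 or 5 (mod 8) are sums of two squares modulo every power of 2. -/
lemma sq_add_sq_mod_two_pow (c : ℤ) (hc : c % 8 = 1 ∨ c % 8 = 5) (m : ℕ) :
    ∃ x y : ℤ, x ^ 2 + y ^ 2 ≡ c [ZMOD (2 : ℤ) ^ m] := by
  have key : ∀ c' y : ℤ, c' % 8 = 1 → c' = c - y ^ 2 →
      ∃ x y : ℤ, x ^ 2 + y ^ 2 ≡ c [ZMOD (2 : ℤ) ^ m] := by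
    intro c' y h1 hy
    have hmod : c' ≡ 1 [ZMOD 8] := by
      unfold Int.ModEq
      omega
    obtain ⟨x, hx, -⟩ := sq_mod_two_pow c' hmod m
    refine ⟨x, y, ?_⟩
    have hdvd : ((2 : ℤ) ^ m) ∣ ((2 : ℤ) ^ (m + 3)) := pow_dvd_pow _ (by omega)
    have hx' : x ^ 2 ≡ c' [ZMOD (2 : ℤ) ^ m] := hx.of_dvd hdvd
    have := hx'.add_right (y ^ 2)
    rw [hy] at this
    simpa using this
  rcases hc with h1 | h5
  · exact key c 0 h1 (by ring)
  · exact key (c - 4) 2 (by omega) (by ring)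

theorem no_congruence_obstruction (k : ℕ) (hk : Odd k) (hk3 : 3 ≤ k) (p : ℕ) (hp : p.Prime)
    (hp1 : (p : ℤ) ≡ 1 [ZMOD (4 * k)]) :
    ∀ q : ℕ, q.Prime → ∃ z : ℤ, z ≡ 2 * k [ZMOD (4 * k)] ∧
      ∀ m : ℕ, 1 ≤ m → ∃ x y : ℤ,
        x ^ 2 + y ^ 2 + z ^ k ≡ (p : ℤ) ^ k [ZMOD ((q : ℤ) ^ m)] := by
  intro q hq
  have hk0 : k ≠ 0 := by omega
  have h4k : (4 * (k : ℤ)) ∣ ((p : ℤ) - 1) := by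
    have h1 := hp1.dvd
    have h : (1 : ℤ) - p = -((p : ℤ) - 1) := by ring
    rw [h] at h1
    exact dvd_neg.mp h1
  have hp2 : (2 : ℤ) ≤ (p : ℤ) := by exact_mod_cast hp.two_le
  have hpk4 : (4 : ℤ) * k + 1 ≤ (p : ℤ) := by
    have hpos : (0 : ℤ) < (p : ℤ) - 1 := by omega
    have := Int.le_of_dvd hpos h4k
    omega
  have h2p : (2 : ℤ) ∣ (p : ℤ) - 1 := dvd_trans ⟨2 * (k : ℤ), by ring⟩ h4k
  have h4p : (4 : ℤ) ∣ (p : ℤ) - 1 := dvd_trans ⟨(k : ℤ), by ring⟩ h4k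
  -- key fact : p^k ≡ p [ZMOD 8]
  have hpk8 : (p : ℤ) ^ k ≡ (p : ℤ) [ZMOD 8] := by
    obtain ⟨j, hjk⟩ := hk
    obtain ⟨a, ha⟩ : ∃ a : ℤ, (p : ℤ) = 2 * a + 1 := by
      obtain ⟨a, ha⟩ := h2p
      exact ⟨a, by omega⟩
    obtain ⟨b, hb⟩ := Int.even_mul_succ_self a
    have h8d : (8 : ℤ) ∣ (p : ℤ) ^ 2 - 1 :=
      ⟨b, by linear_combination ((p : ℤ) + 2 * a + 1) * ha + 4 * hb⟩
    have hsq : ((p : ℤ) ^ 2) ≡ 1 [ZMOD 8] := by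
      unfold Int.ModEq
      omega
    calc (p : ℤ) ^ k = ((p : ℤ) ^ 2) ^ j * (p : ℤ) := by
              rw [hjk, pow_succ, pow_mul]
      _ ≡ 1 ^ j * (p : ℤ) [ZMOD 8] := (hsq.pow j).mul (Int.ModEq.refl _)
      _ = (p : ℤ) := by ring
  by_cases hq2 : q = 2
  · -- the prime 2 : take z = 2k
    subst hq2
    refine ⟨2 * (k : ℤ), Int.ModEq.refl _, ?_⟩
    intro m hm
    set c : ℤ := (p : ℤ) ^ k - (2 * (k : ℤ)) ^ k with hc
    have h8z : (8 : ℤ) ∣ (2 * (k : ℤ)) ^ k := by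
      have h1 : (8 : ℤ) ∣ 2 ^ k := by
        have := pow_dvd_pow (2 : ℤ) hk3
        norm_num at this
        exact this
      rw [mul_pow]
      exact dvd_mul_of_dvd_left h1 _
    have hc8 : c % 8 = 1 ∨ c % 8 = 5 := by
      have h2 : (p : ℤ) ^ k % 8 = (p : ℤ) % 8 := hpk8
      obtain ⟨w, hw⟩ := h8z
      obtain ⟨v, hv⟩ := h4p
      rw [hc, hw]
      omega
    obtain ⟨x, y, hxy⟩ := sq_add_sq_mod_two_pow c hc8 m
    refine ⟨x, y, ?_⟩
    have h2cast : ((2 : ℕ) : ℤ) = (2 : ℤ) := by norm_num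
    rw [h2cast]
    have := hxy.add_right ((2 * (k : ℤ)) ^ k)
    rw [hc] at this
    have heq : (p : ℤ) ^ k - (2 * (k : ℤ)) ^ k + (2 * (k : ℤ)) ^ k = (p : ℤ) ^ k := by ring
    rwa [heq] at this
  · -- odd primes
    haveI : Fact q.Prime := ⟨hq⟩
    have hqZ : Prime (q : ℤ) := Nat.prime_iff_prime_int.mp hq
    have hq2' : 2 < q := lt_of_le_of_ne hq.two_le (Ne.symm hq2)
    -- we find z ≡ 2k mod 4k with q ∤ p^k - z^k, then apply the Hensel lemma
    suffices h : ∃ z : ℤ, (z ≡ 2 * (k : ℤ) [ZMOD 4 * (k : ℤ)]) ∧ ¬ ((q : ℤ) ∣ (p : ℤ) ^ k - z ^ k) by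
      obtain ⟨z, hz1, hz2⟩ := h
      refine ⟨z, hz1, ?_⟩
      intro m hm
      obtain ⟨x, y, hxy⟩ :=
        sq_add_sq_mod_odd_prime_pow q hq hq2 ((p : ℤ) ^ k - z ^ k) hz2 m hm
      refine ⟨x, y, ?_⟩
      have := hxy.add_right (z ^ k)
      have heq : (p : ℤ) ^ k - z ^ k + z ^ k = (p : ℤ) ^ k := by ring
      rwa [heq] at this
    by_cases hqk : q ∣ k
    · -- q divides k : z = 2k works, since then p^k - (2k)^k ≡ 1 mod q
      refine ⟨2 * (k : ℤ), Int.ModEq.refl _, ?_⟩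
      intro hdvd
      have hq2k : (q : ℤ) ∣ (2 * (k : ℤ)) ^ k := by
        have h1 : (q : ℤ) ∣ 2 * (k : ℤ) :=
          Dvd.dvd.mul_left (by exact_mod_cast hqk) 2
        exact dvd_trans h1 (dvd_pow_self _ hk0)
      have hqpk : (q : ℤ) ∣ (p : ℤ) ^ k := by
        have := dvd_add hdvd hq2k
        simpa using this
      have hqp : q ∣ p := by
        have := hqZ.dvd_of_dvd_pow hqpk
        exact_mod_cast this
      have : q = p := (Nat.prime_dvd_prime_iff_eq hq hp).mp hqp
      subst this
      have : (q : ℤ) ≤ (k : ℤ) := by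
        exact_mod_cast Nat.le_of_dvd (by omega) hqk
      omega
    · -- q does not divide k, hence q is coprime to 4k; use CRT-style choice
      have hq4k : ((4 * k : ℕ) : ZMod q) ≠ 0 := by
        intro h0
        rw [ZMod.natCast_eq_zero_iff] at h0
        rcases (Nat.Prime.dvd_mul hq).mp h0 with h4 | hk'
        · have := Nat.le_of_dvd (by norm_num) h4
          interval_cases q
          · omega
          · norm_num at hq
        · exact hqk hk'
      set r : ℤ := if q ∣ p then 1 else 0 with hr
      set t : ℤ := (((((r - 2 * (k : ℤ)) : ℤ) : ZMod q) / ((4 * k : ℕ) : ZMod q)).val : ℤ) with ht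
      refine ⟨2 * (k : ℤ) + (4 * (k : ℤ)) * t, ?_, ?_⟩
      · have : (4 * (k : ℤ)) ∣ (2 * (k : ℤ) - (2 * (k : ℤ) + (4 * (k : ℤ)) * t)) := ⟨-t, by ring⟩
        exact Int.modEq_iff_dvd.mpr this
      · -- compute mod q
        have hzq : (((2 * (k : ℤ) + (4 * (k : ℤ)) * t) : ℤ) : ZMod q) = ((r : ℤ) : ZMod q) := by
          rw [ht]
          push_cast
          rw [ZMod.natCast_val, ZMod.cast_id]
          have h4k' : ((4 : ZMod q) * (k : ZMod q)) ≠ 0 := by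
            have := hq4k
            push_cast at this
            exact this
          rw [mul_div_cancel₀ _ h4k']
          ring
        intro hdvd
        rw [← ZMod.intCast_zmod_eq_zero_iff_dvd] at hdvd
        rw [Int.cast_sub, Int.cast_pow, Int.cast_pow, hzq, Int.cast_natCast] at hdvd
        by_cases hqp : q ∣ p
        · have hr1 : r = 1 := by rw [hr, if_pos hqp]
          have hp0 : ((p : ℕ) : ZMod q) = 0 := (ZMod.natCast_eq_zero_iff p q).mpr hqp
          rw [hr1, hp0] at hdvd
          simp [zero_pow hk0] at hdvd
        · have hr0 : r = 0 := by rw [hr, if_neg hqp]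
          have hp0 : ((p : ℕ) : ZMod q) ≠ 0 := fun h =>
            hqp ((ZMod.natCast_eq_zero_iff p q).mp h)
          rw [hr0] at hdvd
          rw [show ((0 : ℤ) : ZMod q) = 0 from by norm_num] at hdvd
          rw [zero_pow hk0, sub_zero] at hdvd
          exact pow_ne_zero k hp0 hdvd
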